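/- Let n ≥ 3 and suppose the dihedral group D_{2n} has the m-DCI property for some m with 1 ≤ m ≤ n−1. Then n is odd. -/

import Mathlib

/-- The Cayley digraph relation of `G` with connection set `S`:
there is an arc from `x` to `y` iff `y = s * x` for some `s ∈ S`. -/
def cayRel {G : Type*} [Group G] (S : Set G) : G → G → Prop :=
  fun x y => y * x⁻¹ ∈ S

/-- The automorphism group of the Cayley digraph `Cay(G,S)`,
as a subgroup of the permutations of the vertex set `G`. -/
def cayAut {G : Type*} [Group G] (S : Set G) : Subgroup (Equiv.Perm G) where
  carrier := {f | ∀ x y, cayRel S (f x) (f y) ↔ cayRel S x y}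
  one_mem' := by intro x y; rfl
  mul_mem' := by
    intro f g hf hg x y
    rw [Equiv.Perm.mul_apply, Equiv.Perm.mul_apply, hf, hg]
  inv_mem' := by
    intro f hf x y
    simpa [Equiv.Perm.coe_inv, Equiv.apply_symm_apply] using (hf (f⁻¹ x) (f⁻¹ y)).symm

/-- `Cay(G,S)` is a CI-digraph: any isomorphic Cayley digraph `Cay(G,T)`
is Cayley isomorphic to it. -/
def IsCIDigraph {G : Type*} [Group G] (S : Set G) : Prop :=
  ∀ T : Set G, (1 : G) ∉ T → Nonempty (cayRel S ≃r cayRel T) →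
    ∃ α : G ≃* G, α '' S = T

/-- `G` has the `m`-DCI property: every Cayley digraph of `G` of out-valency `m`
is a CI-digraph. -/
def HasDCI (G : Type*) [Group G] (m : ℕ) : Prop :=
  ∀ S : Set G, (1 : G) ∉ S → S.ncard = m → IsCIDigraph S

/-- The right regular representation `R(G)` as a subgroup of `Perm G`. -/
def rightReg (G : Type*) [Group G] : Subgroup (Equiv.Perm G) where
  carrier := Set.range fun g : G => Equiv.mulRight g
  one_mem' := ⟨1, by ext x; simp⟩
  mul_mem' := by
    rintro _ _ ⟨g, rfl⟩ ⟨h, rfl⟩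
    exact ⟨h * g, by ext x; simp [mul_assoc]⟩
  inv_mem' := by
    rintro _ ⟨g, rfl⟩
    exact ⟨g⁻¹, by ext x; simp [Equiv.Perm.inv_def]⟩

/-- A subgroup of permutations of `V` is regular if for all `x y : V` there is a
unique element sending `x` to `y`. -/
def IsRegularSubgroup {V : Type*} (H : Subgroup (Equiv.Perm V)) : Prop :=
  ∀ x y : V, ∃! h : H, (h : Equiv.Perm V) x = y

namespace Stmt9Aux

open DihedralGroup

variable {n : ℕ}

/-- parity character on `ZMod n` (for even `n`). -/
def pr (hn : (2:ℕ) ∣ n) : ZMod n →+* ZMod 2 := ZMod.castHom hn (ZMod 2)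

lemma z2_cases (a : ZMod 2) : a = 0 ∨ a = 1 := by revert a; decide

lemma z2_ne (a : ZMod 2) (h : ¬ a = 0) : a = 1 := by
  rcases z2_cases a with h0 | h1
  · exact absurd h0 h
  · exact h1

lemma z2_neg (a : ZMod 2) : -a = a := by revert a; decide

@[simp] lemma inv_r (i : ZMod n) : (r i)⁻¹ = r (-i) := rfl
@[simp] lemma inv_sr (i : ZMod n) : (sr i)⁻¹ = sr i := rfl

/-- the isomorphism function -/
def phiFun (hn : (2:ℕ) ∣ n) : DihedralGroup n → DihedralGroup n
  | .r x => if pr hn x = 0 then .r x else .sr (x - 1)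
  | .sr t => if pr hn t = 0 then .r (1 - t) else .sr (-t)

def phiInvFun (hn : (2:ℕ) ∣ n) : DihedralGroup n → DihedralGroup n
  | .r x => if pr hn x = 0 then .r x else .sr (1 - x)
  | .sr t => if pr hn t = 0 then .r (t + 1) else .sr (-t)

def phi (hn : (2:ℕ) ∣ n) : Equiv.Perm (DihedralGroup n) where
  toFun := phiFun hn
  invFun := phiInvFun hn
  left_inv := by
    rintro (x | x) <;> by_cases h : pr hn x = 0
    · simp [phiFun, phiInvFun, h]
    · have h1 : pr hn x = 1 := z2_ne _ h
      have h2 : pr hn (x - 1) = 0 := by rw [map_sub, h1, map_one, sub_self]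
      simp [phiFun, phiInvFun, h, h1, h2]
    · have h2 : pr hn (1 - x) ≠ 0 := by
        rw [map_sub, h, map_one, sub_zero]; decide
      simp [phiFun, phiInvFun, h, h2]
    · have h2 : pr hn (-x) ≠ 0 := by
        rw [map_neg, z2_neg]; exact h
      simp [phiFun, phiInvFun, h, h2]
  right_inv := by
    rintro (x | x) <;> by_cases h : pr hn x = 0
    · simp [phiFun, phiInvFun, h]
    · have h1 : pr hn x = 1 := z2_ne _ h
      have h2 : pr hn (1 - x) = 0 := by rw [map_sub, h1, map_one, sub_self]
      simp [phiFun, phiInvFun, h, h1, h2]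
    · have h2 : pr hn (x + 1) ≠ 0 := by
        rw [map_add, h, map_one, zero_add]; decide
      simp [phiFun, phiInvFun, h, h2]
    · have h2 : pr hn (-x) ≠ 0 := by rw [map_neg, z2_neg]; exact h
      simp [phiFun, phiInvFun, h, h2]

lemma phi_r_even (hn : (2:ℕ) ∣ n) {x : ZMod n} (h : pr hn x = 0) :
    phi hn (.r x) = .r x := by simp [phi, phiFun, h]
lemma phi_r_odd (hn : (2:ℕ) ∣ n) {x : ZMod n} (h : ¬ pr hn x = 0) :
    phi hn (.r x) = .sr (x - 1) := by simp [phi, phiFun, h]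
lemma phi_sr_even (hn : (2:ℕ) ∣ n) {x : ZMod n} (h : pr hn x = 0) :
    phi hn (.sr x) = .r (1 - x) := by simp [phi, phiFun, h]
lemma phi_sr_odd (hn : (2:ℕ) ∣ n) {x : ZMod n} (h : ¬ pr hn x = 0) :
    phi hn (.sr x) = .sr (-x) := by simp [phi, phiFun, h]


section Main

variable (Jf : Finset (ZMod n)) (b : Bool) (κ : ZMod n)

/-- the source connection set -/
def SJ : Finset (DihedralGroup n) :=
  Jf.image DihedralGroup.r ∪ (if b then {DihedralGroup.r κ} else ∅)

/-- the target connection set -/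
def TJ : Finset (DihedralGroup n) :=
  Jf.image (fun j => DihedralGroup.sr (j - 1)) ∪ (if b then {DihedralGroup.r κ} else ∅)

lemma mem_SJ_r (d : ZMod n) :
    DihedralGroup.r d ∈ SJ Jf b κ ↔ d ∈ Jf ∨ (b = true ∧ d = κ) := by
  cases b <;> simp [SJ, or_comm]

lemma mem_SJ_sr (e : ZMod n) : DihedralGroup.sr e ∉ SJ Jf b κ := by
  cases b <;> simp [SJ]

lemma mem_TJ_r (d : ZMod n) :
    DihedralGroup.r d ∈ TJ Jf b κ ↔ b = true ∧ d = κ := by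
  cases b <;> simp [TJ]

lemma mem_TJ_sr (e : ZMod n) :
    DihedralGroup.sr e ∈ TJ Jf b κ ↔ e + 1 ∈ Jf := by
  cases b <;> simp only [TJ, Finset.mem_union, Finset.mem_image, Finset.notMem_empty,
    if_true, if_false, Finset.mem_singleton, or_false] <;>
  · constructor
    · rintro h
      rcases h with ⟨j, hj, hje⟩ | h
      · rcases DihedralGroup.sr.inj hje with rfl
        simpa using hj
      · cases h
    · intro h
      exact Or.inl ⟨e + 1, h, by rw [add_sub_cancel_right]⟩

variable (hn : (2:ℕ) ∣ n) (hκ : κ + κ = 0) (hJ1 : ∀ j ∈ Jf, pr hn j = 1)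
  (hJs : ∀ j ∈ Jf, -j ∈ Jf) (hb : b = true → pr hn κ = 0)

include hJ1 in
lemma notJf_of_even {d : ZMod n} (hd : pr hn d = 0) : d ∉ Jf := fun h => by
  rw [hJ1 d h] at hd; exact one_ne_zero hd

include hb in
lemma not_bpart {d : ZMod n} (hd : pr hn d ≠ 0) : ¬ (b = true ∧ d = κ) := by
  rintro ⟨hb', rfl⟩; exact hd (hb hb')

include hJs in
lemma neg_mem_Jf {d : ZMod n} : -d ∈ Jf ↔ d ∈ Jf :=
  ⟨fun h => by simpa using hJs _ h, fun h => hJs _ h⟩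

include hκ in
lemma neg_eq_kappa {d : ZMod n} : -d = κ ↔ d = κ := by
  have h : -κ = κ := by rw [neg_eq_iff_add_eq_zero, hκ]
  constructor
  · intro h'; rw [← h, neg_inj] at h'; exact h'
  · rintro rfl; exact h

set_option maxHeartbeats 2000000 in
include hκ hJ1 hJs hb in
lemma main_iff (x y : DihedralGroup n) :
    y * x⁻¹ ∈ SJ Jf b κ ↔ phi hn y * (phi hn x)⁻¹ ∈ TJ Jf b κ := by
  rcases x with i | i <;> rcases y with j | j <;>
    by_cases hi : pr hn i = 0 <;> by_cases hj : pr hn j = 0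
  · -- r i, r j, both even
    rw [phi_r_even hn hi, phi_r_even hn hj]
    simp only [inv_r, r_mul_r, mem_SJ_r, mem_TJ_r]
    have hd : (j + -i) ∉ Jf := notJf_of_even Jf hn hJ1 (by simp only [map_add, map_sub, map_neg, map_one, hi, hj]; decide)
    tauto
  · -- r i even, r j odd
    rw [phi_r_even hn hi, phi_r_odd hn hj]
    simp only [inv_r, sr_mul_r, r_mul_r, mem_SJ_r, mem_TJ_sr]
    have he : j - 1 + -i + 1 = j + -i := by ring
    rw [he]
    have hd : pr hn (j + -i) ≠ 0 := (by simp only [map_add, map_sub, map_neg, map_one, hi, z2_ne _ hj]; decide)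
    have := not_bpart b κ hn hb hd
    tauto
  · -- r i odd, r j even
    rw [phi_r_odd hn hi, phi_r_even hn hj]
    simp only [inv_r, inv_sr, r_mul_sr, r_mul_r, mem_SJ_r, mem_TJ_sr]
    have he : i - 1 - j + 1 = -(j + -i) := by ring
    rw [he, neg_mem_Jf Jf hJs]
    have hd : pr hn (j + -i) ≠ 0 := (by simp only [map_add, map_sub, map_neg, map_one, z2_ne _ hi, hj]; decide)
    have := not_bpart b κ hn hb hd
    tauto
  · -- r i odd, r j odd
    rw [phi_r_odd hn hi, phi_r_odd hn hj]
    simp only [inv_r, inv_sr, sr_mul_sr, r_mul_r, mem_SJ_r, mem_TJ_r]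
    have he : i - 1 - (j - 1) = -(j + -i) := by ring
    rw [he, neg_eq_kappa κ hκ]
    have hd : (j + -i) ∉ Jf := notJf_of_even Jf hn hJ1 (by simp only [map_add, map_sub, map_neg, map_one, z2_ne _ hi, z2_ne _ hj]; decide)
    tauto
  · -- x = r i even, y = sr j even
    rw [phi_r_even hn hi, phi_sr_even hn hj]
    simp only [inv_r, sr_mul_r, r_mul_r, mem_TJ_r]
    have h1 := mem_SJ_sr Jf b κ (j + -i)
    have hd : pr hn (1 - j + -i) ≠ 0 := (by simp only [map_add, map_sub, map_neg, map_one, hi, hj]; decide)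
    have := not_bpart b κ hn hb hd
    tauto
  · -- x = r i even, y = sr j odd
    rw [phi_r_even hn hi, phi_sr_odd hn hj]
    simp only [inv_r, sr_mul_r, mem_TJ_sr]
    have h1 := mem_SJ_sr Jf b κ (j + -i)
    have hd : (-j + -i + 1) ∉ Jf := notJf_of_even Jf hn hJ1 (by simp only [map_add, map_sub, map_neg, map_one, hi, z2_ne _ hj]; decide)
    tauto
  · -- x = r i odd, y = sr j even
    rw [phi_r_odd hn hi, phi_sr_even hn hj]
    simp only [inv_r, inv_sr, r_mul_sr, sr_mul_r, mem_TJ_sr]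
    have h1 := mem_SJ_sr Jf b κ (j + -i)
    have hd : (i - 1 - (1 - j) + 1) ∉ Jf := notJf_of_even Jf hn hJ1 (by simp only [map_add, map_sub, map_neg, map_one, z2_ne _ hi, hj]; decide)
    tauto
  · -- x = r i odd, y = sr j odd
    rw [phi_r_odd hn hi, phi_sr_odd hn hj]
    simp only [inv_r, inv_sr, sr_mul_sr, mem_TJ_r]
    have h1 := mem_SJ_sr Jf b κ (j + -i)
    have hd : pr hn (i - 1 - -j) ≠ 0 := (by simp only [map_add, map_sub, map_neg, map_one, z2_ne _ hi, z2_ne _ hj]; decide)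
    have := not_bpart b κ hn hb hd
    tauto
  · -- x = sr i even, y = r j even
    rw [phi_sr_even hn hi, phi_r_even hn hj]
    simp only [inv_sr, inv_r, r_mul_sr, r_mul_r, mem_TJ_r]
    have h1 := mem_SJ_sr Jf b κ (i - j)
    have hd : pr hn (j + -(1 - i)) ≠ 0 := (by simp only [map_add, map_sub, map_neg, map_one, hi, hj]; decide)
    have := not_bpart b κ hn hb hd
    tauto
  · -- x = sr i even, y = r j odd
    rw [phi_sr_even hn hi, phi_r_odd hn hj]
    simp only [inv_sr, inv_r, r_mul_sr, sr_mul_r, mem_TJ_sr]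
    have h1 := mem_SJ_sr Jf b κ (i - j)
    have hd : (j - 1 + -(1 - i) + 1) ∉ Jf := notJf_of_even Jf hn hJ1 (by simp only [map_add, map_sub, map_neg, map_one, hi, z2_ne _ hj]; decide)
    tauto
  · -- x = sr i odd, y = r j even
    rw [phi_sr_odd hn hi, phi_r_even hn hj]
    simp only [inv_sr, r_mul_sr, mem_TJ_sr]
    have h1 := mem_SJ_sr Jf b κ (i - j)
    have hd : (-i - j + 1) ∉ Jf := notJf_of_even Jf hn hJ1 (by simp only [map_add, map_sub, map_neg, map_one, z2_ne _ hi, hj]; decide)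
    tauto
  · -- x = sr i odd, y = r j odd
    rw [phi_sr_odd hn hi, phi_r_odd hn hj]
    simp only [inv_sr, sr_mul_sr, mem_TJ_r]
    have h1 := mem_SJ_sr Jf b κ (i - j)
    have hd : pr hn (-i - (j - 1)) ≠ 0 := (by simp only [map_add, map_sub, map_neg, map_one, z2_ne _ hi, z2_ne _ hj]; decide)
    have := not_bpart b κ hn hb hd
    tauto
  · -- sr i even, sr j even
    rw [phi_sr_even hn hi, phi_sr_even hn hj]
    simp only [inv_sr, inv_r, sr_mul_sr, r_mul_r, mem_SJ_r, mem_TJ_r]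
    have he : 1 - j + -(1 - i) = i - j := by ring
    rw [he]
    have hd : (i - j) ∉ Jf := notJf_of_even Jf hn hJ1 (by simp only [map_add, map_sub, map_neg, map_one, hi, hj]; decide)
    tauto
  · -- sr i even, sr j odd
    rw [phi_sr_even hn hi, phi_sr_odd hn hj]
    simp only [inv_sr, inv_r, sr_mul_sr, sr_mul_r, mem_SJ_r, mem_TJ_sr]
    have he : -j + -(1 - i) + 1 = i - j := by ring
    rw [he]
    have hd : pr hn (i - j) ≠ 0 := (by simp only [map_add, map_sub, map_neg, map_one, hi, z2_ne _ hj]; decide)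
    have := not_bpart b κ hn hb hd
    tauto
  · -- sr i odd, sr j even
    rw [phi_sr_odd hn hi, phi_sr_even hn hj]
    simp only [inv_sr, sr_mul_sr, r_mul_sr, mem_SJ_r, mem_TJ_sr]
    have he : -i - (1 - j) + 1 = -(i - j) := by ring
    rw [he, neg_mem_Jf Jf hJs]
    have hd : pr hn (i - j) ≠ 0 := (by simp only [map_add, map_sub, map_neg, map_one, z2_ne _ hi, hj]; decide)
    have := not_bpart b κ hn hb hd
    tauto
  · -- sr i odd, sr j odd
    rw [phi_sr_odd hn hi, phi_sr_odd hn hj]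
    simp only [inv_sr, sr_mul_sr, mem_SJ_r, mem_TJ_r]
    have he : -i - -j = -(i - j) := by ring
    rw [he, neg_eq_kappa κ hκ]
    have hd : (i - j) ∉ Jf := notJf_of_even Jf hn hJ1 (by simp only [map_add, map_sub, map_neg, map_one, z2_ne _ hi, z2_ne _ hj]; decide)
    tauto

end Main

/-- Boolean rotation test -/
def isRot : DihedralGroup n → Bool
  | .r _ => true
  | .sr _ => false

/-- parity of an element -/
def epsF (hn : (2:ℕ) ∣ n) : DihedralGroup n → ZMod 2
  | .r x => pr hn x
  | .sr x => pr hn x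

lemma isRot_ratio (x y : DihedralGroup n) : isRot (y * x⁻¹) = (isRot y == isRot x) := by
  rcases x with i | i <;> rcases y with j | j <;> rfl

lemma eps_phi (hn : (2:ℕ) ∣ n) (x : DihedralGroup n) :
    epsF hn (phi hn x) = (if isRot x then 0 else 1) := by
  rcases x with i | i <;> by_cases h : pr hn i = 0
  · rw [phi_r_even hn h]; simp [epsF, isRot, h]
  · rw [phi_r_odd hn h]; simp [epsF, isRot, map_sub, z2_ne _ h]
  · rw [phi_sr_even hn h]; simp [epsF, isRot, map_sub, h]
  · rw [phi_sr_odd hn h]; simp [epsF, isRot, map_neg, z2_neg, z2_ne _ h]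

lemma z2_sub (a c : ZMod 2) : a - c = a + c := by revert a c; decide

lemma eps_mul (hn : (2:ℕ) ∣ n) (u v : DihedralGroup n) :
    epsF hn (u * v) = epsF hn u + epsF hn v := by
  rcases u with i | i <;> rcases v with j | j <;>
    simp only [epsF, r_mul_r, r_mul_sr, sr_mul_r, sr_mul_sr, map_add, map_sub, z2_sub] <;> ring

lemma eps_inv (hn : (2:ℕ) ∣ n) (u : DihedralGroup n) : epsF hn u⁻¹ = epsF hn u := by
  rcases u with i | i
  · simp only [inv_r, epsF, map_neg, z2_neg]
  · rfl

lemma eps_ratio_phi (hn : (2:ℕ) ∣ n) (x y : DihedralGroup n) :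
    epsF hn (phi hn y * (phi hn x)⁻¹) = 0 ↔ isRot (y * x⁻¹) = true := by
  rw [eps_mul, eps_inv, eps_phi, eps_phi, isRot_ratio]
  rcases hx : isRot x <;> rcases hy : isRot y <;> simp <;> decide

section Comp

variable [NeZero n] (Jf : Finset (ZMod n)) (b : Bool) (κ : ZMod n)

/-- the rotations, as a finset -/
def RotF : Finset (DihedralGroup n) := Finset.univ.image DihedralGroup.r

lemma mem_RotF (g : DihedralGroup n) : g ∈ (RotF : Finset (DihedralGroup n)) ↔ isRot g = true := by
  rcases g with i | i <;> simp [RotF, isRot]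

/-- parity-even elements -/
def EvF (hn : (2:ℕ) ∣ n) : Finset (DihedralGroup n) :=
  Finset.univ.filter (fun g => epsF hn g = 0)

/-- complemented source set -/
def ScJ : Finset (DihedralGroup n) := RotF \ (insert 1 (SJ Jf b κ))

/-- complemented target set -/
def TcJ (hn : (2:ℕ) ∣ n) : Finset (DihedralGroup n) := EvF hn \ (insert 1 (TJ Jf b κ))

variable (hn : (2:ℕ) ∣ n) (hκ : κ + κ = 0) (hJ1 : ∀ j ∈ Jf, pr hn j = 1)
  (hJs : ∀ j ∈ Jf, -j ∈ Jf) (hb : b = true → pr hn κ = 0)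

include hκ hJ1 hJs hb in
lemma comp_iff (x y : DihedralGroup n) :
    y * x⁻¹ ∈ ScJ Jf b κ ↔ phi hn y * (phi hn x)⁻¹ ∈ TcJ Jf b κ hn := by
  have h1 : (y * x⁻¹ = 1) ↔ (phi hn y * (phi hn x)⁻¹ = 1) := by
    rw [mul_inv_eq_one, mul_inv_eq_one, EmbeddingLike.apply_eq_iff_eq]
  rw [ScJ, TcJ, Finset.mem_sdiff, Finset.mem_sdiff, mem_RotF, EvF, Finset.mem_filter,
    Finset.mem_insert, Finset.mem_insert]
  rw [← eps_ratio_phi hn x y, ← main_iff Jf b κ hn hκ hJ1 hJs hb x y, ← h1]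
  simp only [Finset.mem_univ, true_and]

end Comp

section Cards

lemma cast_inj_of_lt [NeZero n] {a c : ℕ} (ha : a < n) (hc : c < n)
    (h : (a : ZMod n) = c) : a = c := by
  have := congrArg ZMod.val h
  rwa [ZMod.val_cast_of_lt ha, ZMod.val_cast_of_lt hc] at this

/-- the index set: `{±1, ±3, …, ±(2t-1)}` plus optionally `κ` -/
def Jset (t : ℕ) (c : Bool) (κ : ZMod n) : Finset (ZMod n) :=
  (((Finset.range t).image fun i => ((2*i+1 : ℕ) : ZMod n)) ∪
    ((Finset.range t).image fun i => -((2*i+1 : ℕ) : ZMod n))) ∪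
  (if c then {κ} else ∅)

variable [NeZero n] {k t : ℕ} {c : Bool} {κ : ZMod n}

lemma Jset_posneg {j : ZMod n} (hj : j ∈ Jset t c κ) :
    (∃ i : ℕ, i < t ∧ (j = ((2*i+1 : ℕ) : ZMod n) ∨ j = -((2*i+1 : ℕ) : ZMod n))) ∨
      (c = true ∧ j = κ) := by
  rw [Jset] at hj
  rcases Finset.mem_union.mp hj with h | h
  · rcases Finset.mem_union.mp h with h | h <;> rw [Finset.mem_image] at h <;>
      obtain ⟨i, hi, hh⟩ := h
    · exact Or.inl ⟨i, Finset.mem_range.mp hi, Or.inl hh.symm⟩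
    · exact Or.inl ⟨i, Finset.mem_range.mp hi, Or.inr hh.symm⟩
  · rcases c with _ | _
    · simp at h
    · rw [if_pos rfl, Finset.mem_singleton] at h
      exact Or.inr ⟨rfl, h⟩

lemma mem_Jset_pos {i : ℕ} (hi : i < t) : ((2*i+1 : ℕ) : ZMod n) ∈ Jset t c κ := by
  simp only [Jset, Finset.mem_union, Finset.mem_image, Finset.mem_range]
  exact Or.inl (Or.inl ⟨i, hi, rfl⟩)

lemma mem_Jset_neg {i : ℕ} (hi : i < t) : (-((2*i+1 : ℕ) : ZMod n)) ∈ Jset t c κ := by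
  simp only [Jset, Finset.mem_union, Finset.mem_image, Finset.mem_range]
  exact Or.inl (Or.inr ⟨i, hi, rfl⟩)

lemma mem_Jset_kappa (hc : c = true) : κ ∈ Jset t c κ := by
  simp [Jset, hc]

section WithK

variable (hk : n = 2*k) (hkk : κ = (k : ZMod n)) (ht : 2*t < k)

include hk ht in
lemma small_lt {i : ℕ} (hi : i < t) : 2*i+1 < k := by omega

include hk hkk ht in
lemma Jset_card : (Jset t c κ).card = 2*t + (if c then 1 else 0) := by
  have hkn : k < n := by omega
  have hcast : ∀ i < t, ∀ i' < t, ((2*i+1 : ℕ) : ZMod n) = ((2*i'+1 : ℕ) : ZMod n) → i = i' := by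
    intro i hi i' hi' h
    have := cast_inj_of_lt (n := n) (by omega) (by omega) h
    omega
  have hA : (((Finset.range t).image fun i => ((2*i+1 : ℕ) : ZMod n))).card = t := by
    rw [Finset.card_image_of_injOn, Finset.card_range]
    intro i hi i' hi' h
    exact hcast i (Finset.mem_range.mp hi) i' (Finset.mem_range.mp hi') h
  have hB : (((Finset.range t).image fun i => -((2*i+1 : ℕ) : ZMod n))).card = t := by
    rw [Finset.card_image_of_injOn, Finset.card_range]
    intro i hi i' hi' h
    exact hcast i (Finset.mem_range.mp hi) i' (Finset.mem_range.mp hi') (by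
      have := neg_injective h; exact_mod_cast this)
  have hdisj : Disjoint ((Finset.range t).image fun i => ((2*i+1 : ℕ) : ZMod n))
      ((Finset.range t).image fun i => -((2*i+1 : ℕ) : ZMod n)) := by
    rw [Finset.disjoint_left]
    intro a hmemA hmemB
    rw [Finset.mem_image] at hmemA hmemB
    obtain ⟨i, hi, rfl⟩ := hmemA
    obtain ⟨i', hi', h⟩ := hmemB
    rw [Finset.mem_range] at hi hi'
    have hsum : (((2*i+1) + (2*i'+1) : ℕ) : ZMod n) = 0 := by
      push_cast
      push_cast at h
      rw [← h]; ring
    rw [ZMod.natCast_eq_zero_iff] at hsum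
    have := Nat.le_of_dvd (by omega) hsum
    omega
  have hAB : (((Finset.range t).image fun i => ((2*i+1 : ℕ) : ZMod n)) ∪
      ((Finset.range t).image fun i => -((2*i+1 : ℕ) : ZMod n))).card = 2*t := by
    rw [Finset.card_union_of_disjoint hdisj, hA, hB]; omega
  rcases c with _ | _
  · simpa [Jset] using hAB
  · have hdisj2 : Disjoint
        ((((Finset.range t).image fun i => ((2*i+1 : ℕ) : ZMod n))) ∪
          ((Finset.range t).image fun i => -((2*i+1 : ℕ) : ZMod n))) {κ} := by
      rw [Finset.disjoint_right]
      intro a ha hmem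
      rw [Finset.mem_singleton] at ha
      subst ha
      rw [Finset.mem_union] at hmem
      rcases hmem with h | h <;> rw [Finset.mem_image] at h <;> obtain ⟨i, hi, h⟩ := h <;>
        rw [Finset.mem_range] at hi
      · have := cast_inj_of_lt (n := n) (show 2*i+1 < n by omega) hkn (by rw [h, hkk])
        omega
      · have hsum : (((2*i+1) + k : ℕ) : ZMod n) = 0 := by
          rw [Nat.cast_add, ← hkk, ← h, add_neg_cancel]
        rw [ZMod.natCast_eq_zero_iff] at hsum
        have := Nat.le_of_dvd (by omega) hsum
        omega
    rw [Jset, if_pos rfl, Finset.card_union_of_disjoint hdisj2, hAB, Finset.card_singleton]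
    simp

end WithK

lemma pr_natCast (hn : (2:ℕ) ∣ n) (a : ℕ) : pr hn ((a : ℕ) : ZMod n) = ((a : ℕ) : ZMod 2) :=
  map_natCast _ a

lemma Jset_parity (hn : (2:ℕ) ∣ n) (hc : c = true → pr hn κ = 1) :
    ∀ j ∈ Jset t c κ, pr hn j = 1 := by
  intro j hj
  rcases Jset_posneg hj with ⟨i, _, h | h⟩ | ⟨hc', rfl⟩
  · rw [h, pr_natCast]
    push_cast
    ring_nf
    rw [show ((2 : ZMod 2)) = 0 from rfl]
    ring
  · rw [h, map_neg, z2_neg, pr_natCast]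
    push_cast
    ring_nf
    rw [show ((2 : ZMod 2)) = 0 from rfl]
    ring
  · exact hc hc'

lemma Jset_symm (hκs : -κ = κ) : ∀ j ∈ Jset t c κ, -j ∈ Jset t c κ := by
  intro j hj
  rcases Jset_posneg hj with ⟨i, hi, h | h⟩ | ⟨hc', rfl⟩
  · rw [h]; exact mem_Jset_neg hi
  · rw [h, neg_neg]; exact mem_Jset_pos hi
  · rw [hκs]; exact mem_Jset_kappa hc'

end Cards

section Cards2

variable [NeZero n] (Jf : Finset (ZMod n)) (b : Bool) (κ : ZMod n)

lemma r_injective : Function.Injective (DihedralGroup.r (n := n)) := fun a c h => by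
  injection h

lemma srm_injective : Function.Injective (fun j : ZMod n => DihedralGroup.sr (j - 1)) :=
  fun a c h => by
    injection h with h'
    exact sub_left_injective h'

lemma card_SJ (hbk : b = true → κ ∉ Jf) :
    (SJ Jf b κ).card = Jf.card + (if b then 1 else 0) := by
  rcases b with _ | _
  · simp [SJ, Finset.card_image_of_injective _ r_injective]
  · rw [SJ, if_pos rfl, Finset.card_union_of_disjoint, Finset.card_image_of_injective _
      r_injective, Finset.card_singleton]
    · simp
    · rw [Finset.disjoint_right]
      intro a ha hmem
      rw [Finset.mem_singleton] at ha
      subst ha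
      rw [Finset.mem_image] at hmem
      obtain ⟨j, hj, hh⟩ := hmem
      cases r_injective hh
      exact hbk rfl hj

lemma card_TJ (hbk : b = true → κ ∉ Jf) :
    (TJ Jf b κ).card = Jf.card + (if b then 1 else 0) := by
  rcases b with _ | _
  · simp [TJ, Finset.card_image_of_injective _ srm_injective]
  · rw [TJ, if_pos rfl, Finset.card_union_of_disjoint, Finset.card_image_of_injective _
      srm_injective, Finset.card_singleton]
    · simp
    · rw [Finset.disjoint_right]
      intro a ha hmem
      rw [Finset.mem_singleton] at ha
      subst ha
      rw [Finset.mem_image] at hmem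
      obtain ⟨j, hj, hh⟩ := hmem
      cases hh

lemma one_not_mem_SJ (hκ0 : κ ≠ 0) (h0 : (0 : ZMod n) ∉ Jf) :
    (1 : DihedralGroup n) ∉ SJ Jf b κ := by
  rw [one_def, mem_SJ_r]
  rintro (h | ⟨_, h⟩)
  · exact h0 h
  · exact hκ0 h.symm

lemma one_not_mem_TJ (hκ0 : κ ≠ 0) :
    (1 : DihedralGroup n) ∉ TJ Jf b κ := by
  rw [one_def, mem_TJ_r]
  rintro ⟨_, h⟩
  exact hκ0 h.symm

lemma SJ_subset_RotF : SJ Jf b κ ⊆ RotF := by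
  intro g hg
  rcases g with d | d
  · simp [mem_RotF, isRot]
  · exact absurd hg (mem_SJ_sr Jf b κ d)

lemma card_RotF : (RotF : Finset (DihedralGroup n)).card = n := by
  rw [RotF, Finset.card_image_of_injective _ r_injective, Finset.card_univ, ZMod.card]

lemma one_mem_RotF : (1 : DihedralGroup n) ∈ RotF := by
  rw [one_def, mem_RotF]; rfl

lemma card_ScJ (hκ0 : κ ≠ 0) (h0 : (0 : ZMod n) ∉ Jf) :
    (ScJ Jf b κ).card = n - 1 - (SJ Jf b κ).card := by
  rw [ScJ, Finset.card_sdiff_of_subset, Finset.card_insert_of_notMem (one_not_mem_SJ Jf b κ hκ0 h0),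
    card_RotF]
  · omega
  · intro g hg
    rw [Finset.mem_insert] at hg
    rcases hg with rfl | hg
    · exact one_mem_RotF
    · exact SJ_subset_RotF Jf b κ hg

/-- parity-even rotations -/
def ERot (hn : (2:ℕ) ∣ n) : Finset (DihedralGroup n) := EvF hn ∩ RotF

lemma pr_eq_zero_iff (hn : (2:ℕ) ∣ n) (d : ZMod n) : pr hn d = 0 ↔ 2 ∣ d.val := by
  have hd : ((d.val : ℕ) : ZMod n) = d := ZMod.natCast_rightInverse d
  have : pr hn d = ((d.val : ℕ) : ZMod 2) := by
    conv_lhs => rw [← hd]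
    exact pr_natCast hn d.val
  rw [this, ZMod.natCast_eq_zero_iff]

lemma one_mem_ERot (hn : (2:ℕ) ∣ n) : (1 : DihedralGroup n) ∈ ERot hn := by
  rw [ERot, Finset.mem_inter]
  refine ⟨?_, one_mem_RotF⟩
  rw [one_def, EvF, Finset.mem_filter]
  exact ⟨Finset.mem_univ _, by simp [epsF]⟩

lemma card_ERot_le {k : ℕ} (hn : (2:ℕ) ∣ n) (hk : n = 2*k) : (ERot hn).card ≤ k := by
  classical
  have hle : (ERot hn).card ≤ (Finset.range k).card := by
    apply Finset.card_le_card_of_injOn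
      (fun g => (match g with | .r d => d.val / 2 | .sr _ => 0))
    · intro g hg
      rw [ERot, Finset.mem_coe, Finset.mem_inter, mem_RotF] at hg
      rcases g with d | d
      · have hv : d.val < n := ZMod.val_lt d
        simp only [Finset.mem_coe, Finset.mem_range]
        omega
      · exact absurd hg.2 (by simp [isRot])
    · intro g1 h1 g2 h2 heq
      rw [Finset.mem_coe, ERot, Finset.mem_inter, mem_RotF] at h1 h2
      rcases g1 with d1 | d1
      · rcases g2 with d2 | d2
        · have he1 : 2 ∣ d1.val := by
            rw [← pr_eq_zero_iff hn]
            exact (Finset.mem_filter.mp h1.1).2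
          have he2 : 2 ∣ d2.val := by
            rw [← pr_eq_zero_iff hn]
            exact (Finset.mem_filter.mp h2.1).2
          have hv1 : d1.val < n := ZMod.val_lt d1
          have hv2 : d2.val < n := ZMod.val_lt d2
          simp only at heq
          have : d1.val = d2.val := by omega
          exact congrArg DihedralGroup.r (ZMod.val_injective n this)
        · exact absurd h2.2 (by simp [isRot])
      · exact absurd h1.2 (by simp [isRot])
  simpa using hle

end Cards2

section Aut

/-- the set of rotations -/
def RotSet : Set (DihedralGroup n) := Set.range DihedralGroup.r

lemma coe_RotF [NeZero n] : ((RotF : Finset (DihedralGroup n)) : Set (DihedralGroup n)) = RotSet := by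
  ext g
  simp [RotF, RotSet]

lemma exists_r_pow (u : ZMod n) (s : ℕ) :
    ∃ v, (DihedralGroup.r u) ^ s = DihedralGroup.r v := by
  induction s with
  | zero => exact ⟨0, by rw [pow_zero, one_def]⟩
  | succ s ih =>
      obtain ⟨v, hv⟩ := ih
      exact ⟨v + u, by rw [pow_succ, hv, r_mul_r]⟩

lemma aut_r (hn3 : 3 ≤ n) (α : DihedralGroup n ≃* DihedralGroup n) (i : ZMod n) :
    ∃ j, α (DihedralGroup.r i) = DihedralGroup.r j := by
  haveI : NeZero n := ⟨by omega⟩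
  obtain ⟨u, hu⟩ : ∃ u, α (DihedralGroup.r 1) = DihedralGroup.r u := by
    rcases h : α (DihedralGroup.r 1) with u | u
    · exact ⟨u, rfl⟩
    · exfalso
      have h2 := α.orderOf_eq (DihedralGroup.r 1)
      rw [h, DihedralGroup.orderOf_sr, DihedralGroup.orderOf_r_one] at h2
      omega
  have hi : DihedralGroup.r i = (DihedralGroup.r (1 : ZMod n)) ^ (i.val) := by
    rw [DihedralGroup.r_one_pow]
    exact congrArg _ (ZMod.natCast_rightInverse i).symm
  rw [hi, map_pow, hu]
  exact exists_r_pow u i.val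

lemma aut_image_inter (hn3 : 3 ≤ n) (α : DihedralGroup n ≃* DihedralGroup n)
    (S : Set (DihedralGroup n)) : α '' S ∩ RotSet = α '' (S ∩ RotSet) := by
  ext g
  constructor
  · rintro ⟨⟨x, hx, rfl⟩, hrot⟩
    refine ⟨x, ⟨hx, ?_⟩, rfl⟩
    obtain ⟨j, hj⟩ := hrot
    obtain ⟨v, hv⟩ := aut_r hn3 α.symm j
    refine ⟨v, ?_⟩
    rw [← hv, hj]
    exact α.symm_apply_apply x
  · rintro ⟨x, ⟨hx, ⟨j, hj⟩⟩, rfl⟩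
    refine ⟨⟨x, hx, rfl⟩, ?_⟩
    obtain ⟨v, hv⟩ := aut_r hn3 α j
    exact ⟨v, by rw [← hv, hj]⟩

lemma no_dci (hn3 : 3 ≤ n) {m : ℕ} (h : HasDCI (DihedralGroup n) m)
    (S T : Finset (DihedralGroup n)) (h1S : (1 : DihedralGroup n) ∉ S)
    (h1T : (1 : DihedralGroup n) ∉ T) (hcard : S.card = m)
    (iso : Nonempty (cayRel (S : Set (DihedralGroup n)) ≃r cayRel (T : Set (DihedralGroup n))))
    (hne : ((S : Set (DihedralGroup n)) ∩ RotSet).ncard ≠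
      ((T : Set (DihedralGroup n)) ∩ RotSet).ncard) : False := by
  obtain ⟨α, hα⟩ := h (S : Set (DihedralGroup n)) (by simpa using h1S)
    (by rw [Set.ncard_coe_finset]; exact hcard) (T : Set (DihedralGroup n)) (by simpa using h1T) iso
  apply hne
  rw [← hα, aut_image_inter hn3, Set.ncard_image_of_injective _ α.injective]

end Aut

/-- build the `RelIso` from the pointwise ratio condition -/
def isoOfIff [NeZero n] (hn : (2:ℕ) ∣ n) (S T : Finset (DihedralGroup n))
    (hiff : ∀ x y, (y * x⁻¹ ∈ S) ↔ (phi hn y * (phi hn x)⁻¹ ∈ T)) :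
    cayRel (S : Set (DihedralGroup n)) ≃r cayRel (T : Set (DihedralGroup n)) where
  toEquiv := phi hn
  map_rel_iff' := @fun a c => by
    change (phi hn c * (phi hn a)⁻¹ ∈ (T : Set (DihedralGroup n))) ↔
      (c * a⁻¹ ∈ (S : Set (DihedralGroup n)))
    simpa using (hiff a c).symm

section Conj

lemma cycleType_invol {V : Type*} [Fintype V] [DecidableEq V] (σ : Equiv.Perm V)
    (h2 : σ * σ = 1) (hfix : ∀ x, σ x ≠ x) :
    σ.cycleType = Multiset.replicate (Fintype.card V / 2) 2 := by
  have horder : orderOf σ ∣ 2 := orderOf_dvd_of_pow_eq_one (by rw [pow_two]; exact h2)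
  have hall : ∀ a ∈ σ.cycleType, a = 2 := by
    intro a ha
    have h1 : 2 ≤ a := Equiv.Perm.two_le_of_mem_cycleType ha
    have hd : a ∣ 2 := by
      have h3 := Multiset.dvd_lcm ha
      rw [Equiv.Perm.lcm_cycleType] at h3
      exact h3.trans horder
    have := Nat.le_of_dvd (by norm_num) hd
    omega
  have hrep : σ.cycleType = Multiset.replicate σ.cycleType.card 2 :=
    Multiset.eq_replicate_card.mpr hall
  have hsup : σ.support = Finset.univ := by
    ext x
    simp [Equiv.Perm.mem_support, hfix x]
  have hsum : σ.cycleType.sum = Fintype.card V := by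
    rw [Equiv.Perm.sum_cycleType, hsup, Finset.card_univ]
  rw [hrep] at hsum ⊢
  rw [Multiset.sum_replicate, smul_eq_mul] at hsum
  congr 1
  omega

lemma conj_iso {G : Type*} [Group G] [Fintype G] [DecidableEq G] (z w : G)
    (hz2 : z * z = 1) (hw2 : w * w = 1) (hz1 : z ≠ 1) (hw1 : w ≠ 1) :
    Nonempty (cayRel ({z} : Set G) ≃r cayRel ({w} : Set G)) := by
  set σ : Equiv.Perm G := Equiv.mulLeft z with hσ
  set τ : Equiv.Perm G := Equiv.mulLeft w with hτ
  have hσ2 : σ * σ = 1 := by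
    ext x
    simp [hσ, Equiv.Perm.mul_apply, ← mul_assoc, hz2]
  have hτ2 : τ * τ = 1 := by
    ext x
    simp [hτ, Equiv.Perm.mul_apply, ← mul_assoc, hw2]
  have hσf : ∀ x, σ x ≠ x := fun x hx => hz1 (by
    have : z * x = x := hx
    rwa [mul_eq_right] at this)
  have hτf : ∀ x, τ x ≠ x := fun x hx => hw1 (by
    have : w * x = x := hx
    rwa [mul_eq_right] at this)
  have hconj : IsConj σ τ := Equiv.Perm.isConj_iff_cycleType_eq.mpr (by
    rw [cycleType_invol σ hσ2 hσf, cycleType_invol τ hτ2 hτf])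
  obtain ⟨c, hc⟩ := isConj_iff.mp hconj
  have key : ∀ a, w * c a = c (z * a) := by
    intro a
    have h1 : (c * σ * c⁻¹) (c a) = τ (c a) := by rw [hc]
    have h2 : (c * σ * c⁻¹) (c a) = c (z * a) := by
      simp [Equiv.Perm.mul_apply, hσ]
    have h3 : τ (c a) = w * c a := rfl
    rw [h2, h3] at h1
    exact h1.symm
  refine ⟨{ toEquiv := c, map_rel_iff' := @fun a d => ?_ }⟩
  change (c d * (c a)⁻¹ ∈ ({w} : Set G)) ↔ (d * a⁻¹ ∈ ({z} : Set G))
  simp only [Set.mem_singleton_iff]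
  rw [mul_inv_eq_iff_eq_mul, mul_inv_eq_iff_eq_mul, key, c.injective.eq_iff]

end Conj

end Stmt9Aux

open Stmt9Aux DihedralGroup in
theorem stmt9' (n m : ℕ) (hn : 3 ≤ n) (hm1 : 1 ≤ m) (hm2 : m ≤ n - 1)
    (h : HasDCI (DihedralGroup n) m) : Odd n := by
  classical
  by_contra hodd
  have hev : Even n := Nat.not_odd_iff_even.mp hodd
  obtain ⟨k, hk⟩ := hev
  have hk2 : n = 2 * k := by omega
  have hkge : 2 ≤ k := by omega
  haveI : NeZero n := ⟨by omega⟩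
  have hn2 : (2:ℕ) ∣ n := ⟨k, hk2⟩
  set κ : ZMod n := ((k : ℕ) : ZMod n) with hκdef
  have hκ2 : κ + κ = 0 := by
    rw [hκdef, ← Nat.cast_add, show k + k = n by omega, ZMod.natCast_self]
  have hκ0 : κ ≠ 0 := by
    rw [hκdef, Ne, ZMod.natCast_eq_zero_iff]
    intro hdvd
    have := Nat.le_of_dvd (by omega) hdvd
    omega
  have hκs : -κ = κ := by rw [neg_eq_iff_add_eq_zero, hκ2]
  have hprκ : pr hn2 κ = ((k : ℕ) : ZMod 2) := pr_natCast hn2 k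
  have param : ∀ mp : ℕ, mp < k →
      ∃ (t : ℕ) (cB bB : Bool), 2*t < k ∧ (cB = true → pr hn2 κ = 1) ∧
        (bB = true → pr hn2 κ = 0) ∧
        2*t + ((if cB then 1 else 0) + (if bB then 1 else 0)) = mp := by
    intro mp hmp
    rcases Nat.even_or_odd mp with ⟨e, he⟩ | ⟨e, he⟩
    · exact ⟨e, false, false, by omega, by simp, by simp, by simp; omega⟩
    · rcases z2_cases ((k : ℕ) : ZMod 2) with hke | hko
      · exact ⟨e, false, true, by omega, by simp, fun _ => by rw [hprκ]; exact hke,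
          by simp; omega⟩
      · exact ⟨e, true, false, by omega, fun _ => by rw [hprκ]; exact hko, by simp,
          by simp; omega⟩
  rcases eq_or_lt_of_le hm1 with hm1' | hmge2
  · -- m = 1 : use the conjugacy construction with S = {r κ}, T = {sr 0}
    refine no_dci hn h {DihedralGroup.r κ} {DihedralGroup.sr 0} ?_ ?_ ?_ ?_ ?_
    · rw [Finset.mem_singleton, one_def]
      intro hh
      exact hκ0 (r_injective hh).symm
    · rw [Finset.mem_singleton, one_def]
      intro hh
      cases hh
    · rw [Finset.card_singleton]; omega
    · have hiso := conj_iso (DihedralGroup.r κ) (DihedralGroup.sr 0)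
        (by rw [r_mul_r, hκ2]; exact one_def.symm)
        (by rw [sr_mul_sr, sub_self]; exact one_def.symm)
        (by rw [one_def]; intro hh; exact hκ0 (r_injective hh))
        (by rw [one_def]; intro hh; cases hh)
      simpa using hiso
    · have hS : ((({DihedralGroup.r κ} : Finset (DihedralGroup n)) :
          Set (DihedralGroup n)) ∩ RotSet) = {DihedralGroup.r κ} := by
        rw [Finset.coe_singleton]
        apply Set.inter_eq_self_of_subset_left
        intro g hg
        rw [Set.mem_singleton_iff] at hg
        subst hg
        exact ⟨κ, rfl⟩
      have hT : ((({DihedralGroup.sr 0} : Finset (DihedralGroup n)) :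
          Set (DihedralGroup n)) ∩ RotSet) = ∅ := by
        ext g
        simp only [Set.mem_inter_iff, Finset.coe_singleton, Set.mem_singleton_iff,
          Set.mem_empty_iff_false, iff_false, not_and]
        rintro rfl ⟨j, hj⟩
        cases hj
      rw [hS, hT, Set.ncard_singleton, Set.ncard_empty]
      omega
  · by_cases hmk : m < k
    · -- direct construction
      obtain ⟨t, cB, bB, ht, hc1, hb0, hsize⟩ := param m hmk
      have hJ1 : ∀ j ∈ Jset t cB κ, pr hn2 j = 1 := Jset_parity hn2 hc1
      have hJs : ∀ j ∈ Jset t cB κ, -j ∈ Jset t cB κ := Jset_symm hκs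
      have hbk : bB = true → κ ∉ Jset t cB κ := fun hb' hmem => by
        have h1 := hJ1 _ hmem
        rw [hb0 hb'] at h1
        exact zero_ne_one h1
      have h0J : (0 : ZMod n) ∉ Jset t cB κ := fun hmem => by
        have h1 := hJ1 _ hmem
        rw [map_zero] at h1
        exact zero_ne_one h1
      have hcardJ : (Jset t cB κ).card = 2*t + (if cB then 1 else 0) :=
        Jset_card hk2 hκdef ht
      refine no_dci hn h (SJ (Jset t cB κ) bB κ) (TJ (Jset t cB κ) bB κ) ?_ ?_ ?_ ?_ ?_
      · exact one_not_mem_SJ _ _ _ hκ0 h0J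
      · exact one_not_mem_TJ _ _ _ hκ0
      · rw [card_SJ _ _ _ hbk, hcardJ]; omega
      · exact ⟨isoOfIff hn2 _ _ (main_iff (Jset t cB κ) bB κ hn2 hκ2 hJ1 hJs hb0)⟩
      · have hSsub : ((SJ (Jset t cB κ) bB κ : Finset (DihedralGroup n)) :
            Set (DihedralGroup n)) ⊆ RotSet := by
          intro g hg
          rw [Finset.mem_coe] at hg
          have h1 := SJ_subset_RotF _ _ _ hg
          rw [← coe_RotF]
          exact h1
        have hS : (((SJ (Jset t cB κ) bB κ : Finset (DihedralGroup n)) :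
            Set (DihedralGroup n)) ∩ RotSet).ncard = m := by
          rw [Set.inter_eq_self_of_subset_left hSsub, Set.ncard_coe_finset,
            card_SJ _ _ _ hbk, hcardJ]
          omega
        have hTsub : ((TJ (Jset t cB κ) bB κ : Finset (DihedralGroup n)) :
            Set (DihedralGroup n)) ∩ RotSet ⊆ {DihedralGroup.r κ} := by
          rintro g ⟨hgT, j, hj⟩
          rw [Finset.mem_coe] at hgT
          rw [← hj] at hgT ⊢
          rw [mem_TJ_r] at hgT
          rw [Set.mem_singleton_iff, hgT.2]
        have hT : (((TJ (Jset t cB κ) bB κ : Finset (DihedralGroup n)) :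
            Set (DihedralGroup n)) ∩ RotSet).ncard ≤ 1 := by
          have h1 := Set.ncard_le_ncard hTsub (Set.finite_singleton _)
          simpa using h1
        rw [hS]
        omega
    · -- complement construction
      have hmpk : n - 1 - m < k := by omega
      obtain ⟨t, cB, bB, ht, hc1, hb0, hsize⟩ := param (n - 1 - m) hmpk
      have hJ1 : ∀ j ∈ Jset t cB κ, pr hn2 j = 1 := Jset_parity hn2 hc1
      have hJs : ∀ j ∈ Jset t cB κ, -j ∈ Jset t cB κ := Jset_symm hκs
      have hbk : bB = true → κ ∉ Jset t cB κ := fun hb' hmem => by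
        have h1 := hJ1 _ hmem
        rw [hb0 hb'] at h1
        exact zero_ne_one h1
      have h0J : (0 : ZMod n) ∉ Jset t cB κ := fun hmem => by
        have h1 := hJ1 _ hmem
        rw [map_zero] at h1
        exact zero_ne_one h1
      have hcardJ : (Jset t cB κ).card = 2*t + (if cB then 1 else 0) :=
        Jset_card hk2 hκdef ht
      have hcardS : (SJ (Jset t cB κ) bB κ).card = n - 1 - m := by
        rw [card_SJ _ _ _ hbk, hcardJ]; omega
      refine no_dci hn h (ScJ (Jset t cB κ) bB κ) (TcJ (Jset t cB κ) bB κ hn2) ?_ ?_ ?_ ?_ ?_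
      · rw [ScJ, Finset.mem_sdiff]
        rintro ⟨_, hno⟩
        exact hno (Finset.mem_insert_self 1 _)
      · rw [TcJ, Finset.mem_sdiff]
        rintro ⟨_, hno⟩
        exact hno (Finset.mem_insert_self 1 _)
      · rw [card_ScJ _ _ _ hκ0 h0J, hcardS]
        omega
      · exact ⟨isoOfIff hn2 _ _ (comp_iff (Jset t cB κ) bB κ hn2 hκ2 hJ1 hJs hb0)⟩
      · have hSsub : ((ScJ (Jset t cB κ) bB κ : Finset (DihedralGroup n)) :
            Set (DihedralGroup n)) ⊆ RotSet := by
          intro g hg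
          rw [Finset.mem_coe, ScJ, Finset.mem_sdiff] at hg
          rw [← coe_RotF]
          exact hg.1
        have hS : (((ScJ (Jset t cB κ) bB κ : Finset (DihedralGroup n)) :
            Set (DihedralGroup n)) ∩ RotSet).ncard = m := by
          rw [Set.inter_eq_self_of_subset_left hSsub, Set.ncard_coe_finset,
            card_ScJ _ _ _ hκ0 h0J, hcardS]
          omega
        have hT : (((TcJ (Jset t cB κ) bB κ hn2 : Finset (DihedralGroup n)) :
            Set (DihedralGroup n)) ∩ RotSet).ncard ≤ k - 1 := by
          rw [← coe_RotF, ← Finset.coe_inter, Set.ncard_coe_finset]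
          have hsub2 : TcJ (Jset t cB κ) bB κ hn2 ∩ RotF ⊆ (ERot hn2).erase 1 := by
            intro g hg
            rw [Finset.mem_inter] at hg
            obtain ⟨hg1, hg2⟩ := hg
            rw [TcJ, Finset.mem_sdiff] at hg1
            rw [Finset.mem_erase]
            constructor
            · intro h1
              exact hg1.2 (by rw [h1]; exact Finset.mem_insert_self _ _)
            · rw [ERot, Finset.mem_inter]
              exact ⟨hg1.1, hg2⟩
          have h1 := Finset.card_le_card hsub2
          have h2 := Finset.card_erase_of_mem (one_mem_ERot hn2)
          have h3 := card_ERot_le hn2 hk2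
          omega
        rw [hS]
        omega



/-- If `D_{2n}` (`n ≥ 3`) has the `m`-DCI property for some
`1 ≤ m ≤ n - 1`, then `n` is odd. -/
theorem stmt9 (n m : ℕ) (hn : 3 ≤ n) (hm1 : 1 ≤ m) (hm2 : m ≤ n - 1)
    (h : HasDCI (DihedralGroup n) m) : Odd n :=
  stmt9' n m hn hm1 hm2 h
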